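/- Every finite simple graph G = (V, E) of maximum degree at most 2 satisfies ψ_4(G) ≤ (2/5)·|V|. -/

import Mathlib

open SimpleGraph

/-- `G` contains a path of order `k` (i.e., with `k` vertices). -/
def HasPathOfOrder {V : Type*} (G : SimpleGraph V) (k : ℕ) : Prop :=
  ∃ (u v : V) (w : G.Walk u v), w.IsPath ∧ w.length + 1 = k

/-- `F` is a `k`-path vertex cover of `G`: the subgraph induced on the
complement of `F` contains no path of order `k`. -/
def IsPathVertexCover {V : Type*} (G : SimpleGraph V) (k : ℕ) (F : Finset V) : Prop :=
  ¬ HasPathOfOrder (G.induce ((↑F : Set V)ᶜ)) k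

/-- `psi G k` is the minimum cardinality of a `k`-path vertex cover of `G`. -/
noncomputable def psi {V : Type*} [Fintype V] (G : SimpleGraph V) (k : ℕ) : ℕ :=
  sInf {n | ∃ F : Finset V, IsPathVertexCover G k F ∧ F.card = n}

/-- There is no (not necessarily induced) path on four distinct vertices inside `t`. -/
def NoP4 {V : Type*} (G : SimpleGraph V) (t : Finset V) : Prop :=
  ∀ a b c d : V, a ∈ t → b ∈ t → c ∈ t → d ∈ t →
    a ≠ b → a ≠ c → a ≠ d → b ≠ c → b ≠ d → c ≠ d →
    G.Adj a b → G.Adj b c → G.Adj c d → False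

lemma cover_of_noP4 {V : Type*} [Fintype V] [DecidableEq V] (G : SimpleGraph V) (F : Finset V)
    (h : NoP4 G (Finset.univ \ F)) : IsPathVertexCover G 4 F := by
  rintro ⟨u, v, w, hp, hlen⟩
  cases w with
  | nil => simp at hlen
  | cons h1 p =>
    cases p with
    | nil => simp at hlen
    | cons h2 q =>
      cases q with
      | nil => simp at hlen
      | cons h3 r =>
        cases r with
        | cons h4 t => simp [SimpleGraph.Walk.length_cons] at hlen
        | nil =>
          rename_i b c
          have hnd := (SimpleGraph.Walk.isPath_def _).mp hp
          simp [SimpleGraph.Walk.support_cons] at hnd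
          obtain ⟨⟨hub, huc, huv⟩, ⟨hbc, hbv⟩, hcv⟩ := hnd
          have hm : ∀ x : ((↑F : Set V)ᶜ : Set V), (x : V) ∈ Finset.univ \ F := by
            intro x
            simp only [Finset.mem_sdiff, Finset.mem_univ, true_and]
            exact x.2
          exact h u b c v (hm u) (hm b) (hm c) (hm v)
            (Subtype.coe_injective.ne hub) (Subtype.coe_injective.ne huc)
            (Subtype.coe_injective.ne huv) (Subtype.coe_injective.ne hbc)
            (Subtype.coe_injective.ne hbv) (Subtype.coe_injective.ne hcv)
            h1 h2 h3

lemma card_filter_mod4 (r : ℕ) (hr : r < 4) :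
    ∀ k, ((Finset.range k).filter (fun i => i % 4 = r)).card = (k + 3 - r) / 4 := by
  intro k
  induction k with
  | zero => simp; omega
  | succ k ih =>
    rw [Finset.range_add_one, Finset.filter_insert]
    by_cases h : k % 4 = r
    · rw [if_pos h, Finset.card_insert_of_notMem (by simp), ih]; omega
    · rw [if_neg h, ih]; omega

lemma three_nbrs {V : Type*} [Fintype V] [DecidableEq V] (G : SimpleGraph V) [DecidableRel G.Adj]
    (hdeg : ∀ v, G.degree v ≤ 2) (u x y z : V) (hxy : x ≠ y) (hxz : x ≠ z) (hyz : y ≠ z)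
    (h1 : G.Adj u x) (h2 : G.Adj u y) (h3 : G.Adj u z) : False := by
  have hsub : ({x, y, z} : Finset V) ⊆ G.neighborFinset u := by
    intro w hw
    simp only [Finset.mem_insert, Finset.mem_singleton] at hw
    rcases hw with rfl | rfl | rfl <;> simpa [SimpleGraph.mem_neighborFinset]
  have hc := Finset.card_le_card hsub
  rw [Finset.card_insert_of_notMem (by simp [hxy, hxz]),
    Finset.card_insert_of_notMem (by simp [hyz]), Finset.card_singleton,
    SimpleGraph.card_neighborFinset_eq_degree] at hc
  have := hdeg u
  omega

lemma main_lemma {V : Type*} [Fintype V] [DecidableEq V] (G : SimpleGraph V) [DecidableRel G.Adj]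
    (hdeg : ∀ v, G.degree v ≤ 2) :
    ∀ n (s : Finset V), s.card ≤ n →
      ∃ F : Finset V, F ⊆ s ∧ 5 * F.card ≤ 2 * s.card ∧ NoP4 G (s \ F) := by
  intro n
  induction n with
  | zero =>
    intro s hs
    have : s = ∅ := Finset.card_eq_zero.mp (le_antisymm hs (Nat.zero_le _))
    subst this
    exact ⟨∅, by simp, by simp, fun a b c d ha => by simp at ha⟩
  | succ n ih =>
    intro s hs
    by_cases hno : NoP4 G s
    · exact ⟨∅, by simp, by simp, by simpa using hno⟩
    simp only [NoP4] at hno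
    push_neg at hno
    obtain ⟨a, b, c, d, ha, hb, hc, hd, hab, hac, had, hbc, hbd, hcd, hAB, hBC, hCD⟩ := hno
    -- the set of lengths of paths (as vertex lists) inside `s`
    set P : Set ℕ :=
      {m | ∃ l : List V, l.Chain' G.Adj ∧ l.Nodup ∧ (∀ x ∈ l, x ∈ s) ∧ l.length = m} with hP
    have hP4 : 4 ∈ P := by
      refine ⟨[a, b, c, d], ?_, ?_, ?_, rfl⟩
      · simp [List.Chain', List.isChain_cons_cons, hAB, hBC, hCD]
      · simp [hab, hac, had, hbc, hbd, hcd]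
      · intro x hx
        simp only [List.mem_cons, List.not_mem_nil, or_false] at hx
        rcases hx with rfl | rfl | rfl | rfl <;> assumption
    have hbdd : BddAbove P := by
      refine ⟨s.card, fun m hm => ?_⟩
      obtain ⟨l, _, hnd, hmem, hlen⟩ := hm
      have hsub : l.toFinset ⊆ s := fun x hx => hmem x (List.mem_toFinset.mp hx)
      have := Finset.card_le_card hsub
      rwa [List.toFinset_card_of_nodup hnd, hlen] at this
    obtain ⟨l, hchain, hnd, hmem, hlen⟩ := Nat.sSup_mem ⟨4, hP4⟩ hbdd
    set k := sSup P with hk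
    have hk4 : 4 ≤ k := le_csSup hbdd hP4
    have hmax : ∀ m ∈ P, m ≤ k := fun m hm => le_csSup hbdd hm
    -- vertex indexing
    set v : ℕ → V := fun i => l.getD i a with hvdef
    have hv : ∀ i (h : i < k), v i = l[i]'(by omega) := by
      intro i h
      simp only [hvdef]
      exact List.getD_eq_getElem l a (by omega)
    have hvl : ∀ i, i < k → v i ∈ l := by
      intro i h; rw [hv i h]; exact List.getElem_mem _
    have hvs : ∀ i, i < k → v i ∈ s := fun i h => hmem _ (hvl i h)
    have hvinj : ∀ i, i < k → ∀ j, j < k → v i = v j → i = j := by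
      intro i hi j hj hij
      rw [hv i hi, hv j hj] at hij
      exact (List.Nodup.getElem_inj_iff hnd).mp hij
    have hvadj : ∀ i, i + 1 < k → G.Adj (v i) (v (i + 1)) := by
      intro i h
      rw [hv i (by omega), hv (i + 1) h]
      have := List.isChain_iff_getElem.mp hchain i (by omega)
      simpa using this
    have hvl' : ∀ x ∈ l, ∃ i, i < k ∧ v i = x := by
      intro x hx
      obtain ⟨i, hi, hix⟩ := List.mem_iff_getElem.mp hx
      exact ⟨i, by omega, by rw [hv i (by omega)]; exact hix⟩
    have hlne : l ≠ [] := by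
      intro h; rw [h] at hlen; simp at hlen; omega
    -- maximality: cannot extend at the front
    have hpre : ∀ x, x ∈ s → x ∉ l → ¬ G.Adj x (v 0) := by
      intro x hxs hxl hadj
      have hmem' : k + 1 ∈ P := by
        refine ⟨x :: l, ?_, List.nodup_cons.mpr ⟨hxl, hnd⟩, ?_, by simp [hlen]⟩
        · refine List.isChain_cons.mpr ⟨?_, hchain⟩
          intro y hy
          rw [List.head?_eq_getElem?, List.getElem?_eq_getElem (by omega : 0 < l.length)] at hy
          simp only [Option.mem_some_iff] at hy
          subst hy
          rw [← hv 0 (by omega)]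
          exact hadj
        · intro z hz
          rcases List.mem_cons.mp hz with rfl | hz
          · exact hxs
          · exact hmem z hz
      have := hmax _ hmem'
      omega
    -- maximality: cannot extend at the back
    have hsuf : ∀ x, x ∈ s → x ∉ l → ¬ G.Adj (v (k - 1)) x := by
      intro x hxs hxl hadj
      have hmem' : k + 1 ∈ P := by
        refine ⟨l ++ [x], ?_, ?_, ?_, by simp [hlen]⟩
        · refine List.isChain_append.mpr ⟨hchain, List.isChain_singleton x, ?_⟩
          intro p hp q hq
          rw [List.getLast?_eq_getElem?, List.getElem?_eq_getElem (by omega : l.length - 1 < l.length)] at hp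
          simp only [Option.mem_some_iff] at hp
          simp only [List.head?_cons, Option.mem_some_iff] at hq
          subst hp
          subst hq
          have : v (k - 1) = l[l.length - 1]'(by omega) := by
            rw [hv (k - 1) (by omega)]
            congr 1
            omega
          rw [← this]
          exact hadj
        · rw [List.nodup_append]
          exact ⟨hnd, List.nodup_singleton x, by
            intro y hy z hy' hyz
            simp only [List.mem_singleton] at hy'
            subst hy'
            exact hxl (hyz ▸ hy)⟩
        · intro z hz
          rcases List.mem_append.mp hz with hz | hz
          · exact hmem z hz
          · simp only [List.mem_singleton] at hz; subst hz; exact hxs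
      have := hmax _ hmem'
      omega
    -- interior vertices have only their two chain neighbours
    have hInt : ∀ j x, j + 2 < k → G.Adj (v (j + 1)) x → x = v j ∨ x = v (j + 2) := by
      intro j x hj hadj
      by_contra hcon
      push_neg at hcon
      obtain ⟨hx1, hx2⟩ := hcon
      refine three_nbrs G hdeg (v (j + 1)) (v j) (v (j + 2)) x ?_ ?_ ?_ ?_ ?_ hadj
      · intro h; have := hvinj j (by omega) (j + 2) (by omega) h; omega
      · exact fun h => hx1 h.symm
      · exact fun h => hx2 h.symm
      · exact (hvadj j (by omega)).symm
      · exact hvadj (j + 1) (by omega)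
    -- endpoint 0
    have hEnd0 : ∀ x, x ∈ s → G.Adj (v 0) x → x = v 1 ∨ x = v (k - 1) := by
      intro x hxs hadj
      by_cases hxl : x ∈ l
      · obtain ⟨j, hj, rfl⟩ := hvl' x hxl
        have hj0 : j ≠ 0 := by
          intro h; subst h; exact G.loopless.irrefl _ hadj
        by_cases hj1 : j = 1
        · subst hj1; exact Or.inl rfl
        by_cases hjk : j + 1 < k
        · exfalso
          have hj2 : 2 ≤ j := by omega
          have := hInt (j - 1) (v 0) (by omega) (by
            have : j - 1 + 1 = j := by omega
            rw [this]; exact hadj.symm)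
          rcases this with h | h
          · have := hvinj 0 (by omega) (j - 1) (by omega) h; omega
          · have h' : j - 1 + 2 = j + 1 := by omega
            rw [h'] at h
            have := hvinj 0 (by omega) (j + 1) (by omega) h; omega
        · have : j = k - 1 := by omega
          subst this; exact Or.inr rfl
      · exact absurd hadj.symm (hpre x hxs hxl)
    -- endpoint k-1
    have hEndL : ∀ x, x ∈ s → G.Adj (v (k - 1)) x → x = v (k - 2) ∨ x = v 0 := by
      intro x hxs hadj
      by_cases hxl : x ∈ l
      · obtain ⟨j, hj, rfl⟩ := hvl' x hxl
        have hjk : j ≠ k - 1 := by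
          intro h; subst h; exact G.loopless.irrefl _ hadj
        by_cases hj0 : j = 0
        · subst hj0; exact Or.inr rfl
        by_cases hjk2 : j = k - 2
        · subst hjk2; exact Or.inl rfl
        · exfalso
          have hj1 : 1 ≤ j ∧ j + 1 < k := by omega
          have := hInt (j - 1) (v (k - 1)) (by omega) (by
            have : j - 1 + 1 = j := by omega
            rw [this]; exact hadj.symm)
          rcases this with h | h
          · have := hvinj (k - 1) (by omega) (j - 1) (by omega) h; omega
          · have h' : j - 1 + 2 = j + 1 := by omega
            rw [h'] at h
            have := hvinj (k - 1) (by omega) (j + 1) (by omega) h; omega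
      · exact absurd hadj (hsuf x hxs hxl)
    -- no edges leave l
    have hcross : ∀ i, i < k → ∀ x, x ∈ s → G.Adj (v i) x → x ∈ l := by
      intro i hi x hxs hadj
      by_cases hi0 : i = 0
      · subst hi0
        rcases hEnd0 x hxs hadj with rfl | rfl
        · exact hvl 1 (by omega)
        · exact hvl (k - 1) (by omega)
      by_cases hik : i = k - 1
      · subst hik
        rcases hEndL x hxs hadj with rfl | rfl
        · exact hvl (k - 2) (by omega)
        · exact hvl 0 (by omega)
      · have := hInt (i - 1) x (by omega) (by
          have : i - 1 + 1 = i := by omega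
          rw [this]; exact hadj)
        rcases this with rfl | rfl
        · exact hvl (i - 1) (by omega)
        · exact hvl (i - 1 + 2) (by omega)
    have hcross' : ∀ x ∈ l, ∀ y ∈ s, G.Adj x y → y ∈ l := by
      intro x hx y hy hadj
      obtain ⟨i, hi, rfl⟩ := hvl' x hx
      exact hcross i hi y hy hadj
    -- classification of edges inside l
    have hclass : ∀ i, i < k → ∀ j, j < k → G.Adj (v i) (v j) →
        j = i + 1 ∨ i = j + 1 ∨ (i = 0 ∧ j = k - 1) ∨ (j = 0 ∧ i = k - 1) := by
      intro i hi j hj hadj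
      by_cases hi0 : i = 0
      · subst hi0
        rcases hEnd0 (v j) (hvs j hj) hadj with h | h
        · have := hvinj j hj 1 (by omega) h
          omega
        · have := hvinj j hj (k - 1) (by omega) h
          omega
      by_cases hik : i = k - 1
      · subst hik
        rcases hEndL (v j) (hvs j hj) hadj with h | h
        · have := hvinj j hj (k - 2) (by omega) h
          omega
        · have := hvinj j hj 0 (by omega) h
          omega
      · have := hInt (i - 1) (v j) (by omega) (by
          have h' : i - 1 + 1 = i := by omega
          rw [h']; exact hadj)
        rcases this with h | h
        · have := hvinj j hj (i - 1) (by omega) h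
          omega
        · have := hvinj j hj (i - 1 + 2) (by omega) h
          omega
    -- recursion on the rest
    have hTsub : l.toFinset ⊆ s := fun x hx => hmem x (List.mem_toFinset.mp hx)
    have hTcard : l.toFinset.card = k := by
      rw [List.toFinset_card_of_nodup hnd, hlen]
    have hks : k ≤ s.card := by
      have := Finset.card_le_card hTsub
      omega
    set s' : Finset V := s \ l.toFinset with hs'
    have hs'card : s'.card = s.card - k := by
      rw [hs', Finset.card_sdiff_of_subset hTsub, hTcard]
    obtain ⟨F', hF'sub, hF'card, hF'no⟩ := ih s' (by omega)
    -- choose deleted indices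
    by_cases hcyc : G.Adj (v 0) (v (k - 1))
    case pos =>
      -- cycle: delete indices ≡ 0 (mod 4)
      refine ⟨((Finset.range k).filter (fun i => i % 4 = 0)).image v ∪ F', ?_, ?_, ?_⟩
      · intro x hx
        rcases Finset.mem_union.mp hx with hx | hx
        · obtain ⟨i, hi, rfl⟩ := Finset.mem_image.mp hx
          exact hvs i (Finset.mem_range.mp (Finset.mem_filter.mp hi).1)
        · exact (Finset.sdiff_subset) (hF'sub hx)
      · have h1 : (((Finset.range k).filter (fun i => i % 4 = 0)).image v ∪ F').card ≤
            ((Finset.range k).filter (fun i => i % 4 = 0)).card + F'.card :=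
          le_trans (Finset.card_union_le _ _) (by
            have := Finset.card_image_le (s := (Finset.range k).filter (fun i => i % 4 = 0)) (f := v)
            omega)
        have h2 := card_filter_mod4 0 (by omega) k
        omega
      · intro a' b' c' d' ha' hb' hc' hd' nab nac nad nbc nbd ncd eab ebc ecd
        have hsa' := (Finset.mem_sdiff.mp ha').1
        have hsb' := (Finset.mem_sdiff.mp hb').1
        have hsc' := (Finset.mem_sdiff.mp hc').1
        have hsd' := (Finset.mem_sdiff.mp hd').1
        have hnF := fun (x : V) (hx : x ∈ s \ (((Finset.range k).filter (fun i => i % 4 = 0)).image v ∪ F')) =>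
          (Finset.mem_sdiff.mp hx).2
        by_cases hal : a' ∈ l
        · -- all four inside l
          have hbl : b' ∈ l := hcross' a' hal b' hsb' eab
          have hcl : c' ∈ l := hcross' b' hbl c' hsc' ebc
          have hdl : d' ∈ l := hcross' c' hcl d' hsd' ecd
          obtain ⟨ia, hia, rfl⟩ := hvl' a' hal
          obtain ⟨ib, hib, rfl⟩ := hvl' b' hbl
          obtain ⟨ic, hic, rfl⟩ := hvl' c' hcl
          obtain ⟨id, hid, rfl⟩ := hvl' d' hdl
          have hmod : ∀ i, i < k → v i ∈ s \ (((Finset.range k).filter (fun i => i % 4 = 0)).image v ∪ F') →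
              i % 4 ≠ 0 := by
            intro i hi hmem' hcontra
            exact (Finset.mem_sdiff.mp hmem').2 (Finset.mem_union_left _
              (Finset.mem_image.mpr ⟨i, Finset.mem_filter.mpr ⟨Finset.mem_range.mpr hi, hcontra⟩, rfl⟩))
          have ma := hmod ia hia ha'
          have mb := hmod ib hib hb'
          have mc := hmod ic hic hc'
          have md := hmod id hid hd'
          have d1 := hclass ia hia ib hib eab
          have d2 := hclass ib hib ic hic ebc
          have d3 := hclass ic hic id hid ecd
          have nab' : ia ≠ ib := fun h => nab (by rw [h])
          have nac' : ia ≠ ic := fun h => nac (by rw [h])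
          have nad' : ia ≠ id := fun h => nad (by rw [h])
          have nbc' : ib ≠ ic := fun h => nbc (by rw [h])
          have nbd' : ib ≠ id := fun h => nbd (by rw [h])
          have ncd' : ic ≠ id := fun h => ncd (by rw [h])
          omega
        · -- all four outside l : contradiction with F'
          have hbl : b' ∉ l := fun h => hal (hcross' b' h a' hsa' eab.symm)
          have hcl : c' ∉ l := fun h => hbl (hcross' c' h b' hsb' ebc.symm)
          have hdl : d' ∉ l := fun h => hcl (hcross' d' h c' hsc' ecd.symm)
          have hmem2 : ∀ x, x ∈ s \ (((Finset.range k).filter (fun i => i % 4 = 0)).image v ∪ F') →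
              x ∉ l → x ∈ s' \ F' := by
            intro x hx hxl
            refine Finset.mem_sdiff.mpr ⟨Finset.mem_sdiff.mpr ⟨(Finset.mem_sdiff.mp hx).1, ?_⟩, ?_⟩
            · exact fun h => hxl (List.mem_toFinset.mp h)
            · exact fun h => (Finset.mem_sdiff.mp hx).2 (Finset.mem_union_right _ h)
          exact hF'no a' b' c' d' (hmem2 a' ha' hal) (hmem2 b' hb' hbl) (hmem2 c' hc' hcl)
            (hmem2 d' hd' hdl) nab nac nad nbc nbd ncd eab ebc ecd
    case neg =>
      -- path: delete indices ≡ 3 (mod 4)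
      refine ⟨((Finset.range k).filter (fun i => i % 4 = 3)).image v ∪ F', ?_, ?_, ?_⟩
      · intro x hx
        rcases Finset.mem_union.mp hx with hx | hx
        · obtain ⟨i, hi, rfl⟩ := Finset.mem_image.mp hx
          exact hvs i (Finset.mem_range.mp (Finset.mem_filter.mp hi).1)
        · exact (Finset.sdiff_subset) (hF'sub hx)
      · have h1 : (((Finset.range k).filter (fun i => i % 4 = 3)).image v ∪ F').card ≤
            ((Finset.range k).filter (fun i => i % 4 = 3)).card + F'.card :=
          le_trans (Finset.card_union_le _ _) (by
            have := Finset.card_image_le (s := (Finset.range k).filter (fun i => i % 4 = 3)) (f := v)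
            omega)
        have h2 := card_filter_mod4 3 (by omega) k
        omega
      · intro a' b' c' d' ha' hb' hc' hd' nab nac nad nbc nbd ncd eab ebc ecd
        have hsa' := (Finset.mem_sdiff.mp ha').1
        have hsb' := (Finset.mem_sdiff.mp hb').1
        have hsc' := (Finset.mem_sdiff.mp hc').1
        have hsd' := (Finset.mem_sdiff.mp hd').1
        by_cases hal : a' ∈ l
        · have hbl : b' ∈ l := hcross' a' hal b' hsb' eab
          have hcl : c' ∈ l := hcross' b' hbl c' hsc' ebc
          have hdl : d' ∈ l := hcross' c' hcl d' hsd' ecd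
          obtain ⟨ia, hia, rfl⟩ := hvl' a' hal
          obtain ⟨ib, hib, rfl⟩ := hvl' b' hbl
          obtain ⟨ic, hic, rfl⟩ := hvl' c' hcl
          obtain ⟨id, hid, rfl⟩ := hvl' d' hdl
          have hmod : ∀ i, i < k → v i ∈ s \ (((Finset.range k).filter (fun i => i % 4 = 3)).image v ∪ F') →
              i % 4 ≠ 3 := by
            intro i hi hmem' hcontra
            exact (Finset.mem_sdiff.mp hmem').2 (Finset.mem_union_left _
              (Finset.mem_image.mpr ⟨i, Finset.mem_filter.mpr ⟨Finset.mem_range.mpr hi, hcontra⟩, rfl⟩))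
          have ma := hmod ia hia ha'
          have mb := hmod ib hib hb'
          have mc := hmod ic hic hc'
          have md := hmod id hid hd'
          -- eliminate the cycle cases
          have noCyc : ∀ i j, ¬ (G.Adj (v i) (v j) ∧ ((i = 0 ∧ j = k - 1) ∨ (j = 0 ∧ i = k - 1))) := by
            rintro i j ⟨hadj, h | h⟩
            · exact hcyc (h.1 ▸ h.2 ▸ hadj)
            · exact hcyc (h.1 ▸ h.2 ▸ hadj.symm)
          have d1 : ib = ia + 1 ∨ ia = ib + 1 := by
            rcases hclass ia hia ib hib eab with h | h | h | h
            · exact Or.inl h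
            · exact Or.inr h
            · exact absurd ⟨eab, Or.inl h⟩ (noCyc ia ib)
            · exact absurd ⟨eab, Or.inr h⟩ (noCyc ia ib)
          have d2 : ic = ib + 1 ∨ ib = ic + 1 := by
            rcases hclass ib hib ic hic ebc with h | h | h | h
            · exact Or.inl h
            · exact Or.inr h
            · exact absurd ⟨ebc, Or.inl h⟩ (noCyc ib ic)
            · exact absurd ⟨ebc, Or.inr h⟩ (noCyc ib ic)
          have d3 : id = ic + 1 ∨ ic = id + 1 := by
            rcases hclass ic hic id hid ecd with h | h | h | h
            · exact Or.inl h
            · exact Or.inr h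
            · exact absurd ⟨ecd, Or.inl h⟩ (noCyc ic id)
            · exact absurd ⟨ecd, Or.inr h⟩ (noCyc ic id)
          have nab' : ia ≠ ib := fun h => nab (by rw [h])
          have nac' : ia ≠ ic := fun h => nac (by rw [h])
          have nad' : ia ≠ id := fun h => nad (by rw [h])
          have nbc' : ib ≠ ic := fun h => nbc (by rw [h])
          have nbd' : ib ≠ id := fun h => nbd (by rw [h])
          have ncd' : ic ≠ id := fun h => ncd (by rw [h])
          omega
        · have hbl : b' ∉ l := fun h => hal (hcross' b' h a' hsa' eab.symm)
          have hcl : c' ∉ l := fun h => hbl (hcross' c' h b' hsb' ebc.symm)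
          have hdl : d' ∉ l := fun h => hcl (hcross' d' h c' hsc' ecd.symm)
          have hmem2 : ∀ x, x ∈ s \ (((Finset.range k).filter (fun i => i % 4 = 3)).image v ∪ F') →
              x ∉ l → x ∈ s' \ F' := by
            intro x hx hxl
            refine Finset.mem_sdiff.mpr ⟨Finset.mem_sdiff.mpr ⟨(Finset.mem_sdiff.mp hx).1, ?_⟩, ?_⟩
            · exact fun h => hxl (List.mem_toFinset.mp h)
            · exact fun h => (Finset.mem_sdiff.mp hx).2 (Finset.mem_union_right _ h)
          exact hF'no a' b' c' d' (hmem2 a' ha' hal) (hmem2 b' hb' hbl) (hmem2 c' hc' hcl)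
            (hmem2 d' hd' hdl) nab nac nad nbc nbd ncd eab ebc ecd

/-- Every graph of maximum degree at most `2` satisfies `ψ₄(G) ≤ (2/5)·|V|`. -/
theorem stmt_12 {V : Type*} [Fintype V] (G : SimpleGraph V) [DecidableRel G.Adj]
    (hdeg : ∀ v, G.degree v ≤ 2) :
    5 * psi G 4 ≤ 2 * Fintype.card V := by
  classical
  obtain ⟨F, hFsub, hFcard, hFno⟩ :=
    main_lemma G hdeg (Fintype.card V) Finset.univ (by rw [Finset.card_univ])
  have hcov : IsPathVertexCover G 4 F := cover_of_noP4 G F hFno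
  have hle : psi G 4 ≤ F.card := Nat.sInf_le ⟨F, hcov, rfl⟩
  rw [Finset.card_univ] at hFcard
  omega
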